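/- Let H be a Hurwitz real d×d matrix (every complex eigenvalue of H has strictly negative real part) and let O be a real d×d matrix. Then: (a) the Sylvester (Lyapunov) equation HW + WHᵀ + O = 0 has a unique solution W; (b) there exists α₀ > 0 such that for all 0 < α ≤ α₀ the series W^{(α)} := α Σ_{k=0}^∞ (I + αH)^k O ((I + αH)ᵀ)^k converges and satisfies the discrete-time Sylvester equation (I + αH) W^{(α)} (I + αH)ᵀ − W^{(α)} + αO = 0; and (c) there exists C > 0 such that ‖W^{(α)} − W‖ ≤ Cα for all 0 < α ≤ α₀. -/

import Mathlib

open Matrix Filter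

section Aux

open scoped ENNReal NNReal

attribute [local instance] Matrix.frobeniusNormedAddCommGroup Matrix.frobeniusNormedRing
  Matrix.frobeniusNormedAlgebra Matrix.frobeniusNormedSpace

variable {d : ℕ}

private lemma frob_entry_le (A : Matrix (Fin d) (Fin d) ℝ) (i j : Fin d) : |A i j| ≤ ‖A‖ := by
  have h : |A i j| ^ (2:ℝ) ≤ ∑ i', ∑ j', ‖A i' j'‖ ^ (2:ℝ) := by
    calc |A i j| ^ (2:ℝ) = ‖A i j‖ ^ (2:ℝ) := by rw [Real.norm_eq_abs]
    _ ≤ ∑ j', ‖A i j'‖ ^ (2:ℝ) := by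
        apply Finset.single_le_sum (f := fun j' => ‖A i j'‖ ^ (2:ℝ)) (fun _ _ => by positivity)
          (Finset.mem_univ j)
    _ ≤ ∑ i', ∑ j', ‖A i' j'‖ ^ (2:ℝ) := by
        apply Finset.single_le_sum (f := fun i' => ∑ j', ‖A i' j'‖ ^ (2:ℝ))
          (fun _ _ => by positivity) (Finset.mem_univ i)
  rw [Matrix.frobenius_norm_def]
  calc |A i j| = (|A i j| ^ (2:ℝ)) ^ (1/2 : ℝ) := by
        rw [← Real.rpow_mul (abs_nonneg _)]; norm_num
  _ ≤ (∑ i', ∑ j', ‖A i' j'‖ ^ (2:ℝ)) ^ (1/2 : ℝ) := by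
        apply Real.rpow_le_rpow (by positivity) h (by norm_num)

private lemma gelfand_pow_bound (X : Matrix (Fin d) (Fin d) ℂ) {ρ : ℝ} (hρ : 0 < ρ)
    (h : spectralRadius ℂ X < ENNReal.ofReal ρ) :
    ∃ K : ℝ, 1 ≤ K ∧ ∀ n : ℕ, ‖X ^ n‖ ≤ K * ρ ^ n := by
  have hg := spectrum.pow_nnnorm_pow_one_div_tendsto_nhds_spectralRadius X
  have hev : ∀ᶠ n : ℕ in atTop, ((‖X ^ n‖₊ : ℝ≥0∞)) ^ (1/(n:ℝ)) < ENNReal.ofReal ρ :=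
    hg.eventually_lt_const h
  obtain ⟨N, hN⟩ := eventually_atTop.mp hev
  have key : ∀ n : ℕ, N ≤ n → 1 ≤ n → ‖X ^ n‖ ≤ ρ ^ n := by
    intro n hn h1
    have hlt := hN n hn
    have hne : (n : ℝ) ≠ 0 := by positivity
    have h2 : ((‖X ^ n‖₊ : ℝ≥0∞)) ≤ (ENNReal.ofReal ρ) ^ (n : ℝ) := by
      have h3 := ENNReal.rpow_le_rpow hlt.le (le_of_lt (by positivity : (0:ℝ) < n))
      rwa [← ENNReal.rpow_mul, one_div, inv_mul_cancel₀ hne, ENNReal.rpow_one] at h3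
    rw [ENNReal.rpow_natCast, ← ENNReal.ofReal_pow hρ.le,
      ← ENNReal.ofReal_coe_nnreal, coe_nnnorm, ENNReal.ofReal_le_ofReal_iff (by positivity)] at h2
    exact h2
  set K : ℝ := 1 + ∑ i ∈ Finset.range (N + 1), ‖X ^ i‖ / ρ ^ i with hK
  have hsum0 : (0:ℝ) ≤ ∑ i ∈ Finset.range (N + 1), ‖X ^ i‖ / ρ ^ i :=
    Finset.sum_nonneg fun i _ => by positivity
  have hK1 : 1 ≤ K := by rw [hK]; linarith
  refine ⟨K, hK1, fun n => ?_⟩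
  rcases le_or_gt (N + 1) n with hn | hn
  · calc ‖X ^ n‖ ≤ ρ ^ n := key n (by omega) (by omega)
    _ = 1 * ρ ^ n := (one_mul _).symm
    _ ≤ K * ρ ^ n := mul_le_mul_of_nonneg_right hK1 (by positivity)
  · have hmem : n ∈ Finset.range (N + 1) := Finset.mem_range.mpr hn
    have h1 : ‖X ^ n‖ / ρ ^ n ≤ K := by
      have h2 : ‖X ^ n‖ / ρ ^ n ≤ ∑ i ∈ Finset.range (N + 1), ‖X ^ i‖ / ρ ^ i :=
        Finset.single_le_sum (f := fun i => ‖X ^ i‖ / ρ ^ i) (fun i _ => by positivity) hmem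
      rw [hK]; linarith
    rw [div_le_iff₀ (by positivity)] at h1
    exact h1

set_option maxHeartbeats 2000000 in
/-- Uniform geometric bound on powers of `1 + α • H` for `0 < α ≤ α₁`. -/
private lemma key_bound (H : Matrix (Fin d) (Fin d) ℝ)
    (hH : ∀ z ∈ spectrum ℂ (H.map Complex.ofReal), z.re < 0) :
    ∃ α₁ > (0:ℝ), ∃ c > (0:ℝ), ∃ K : ℝ, 1 ≤ K ∧ ∀ α : ℝ, 0 < α → α ≤ α₁ →
      (0 < 1 - c * α ∧ 1 - c * α < 1) ∧ ∀ k : ℕ, ‖(1 + α • H) ^ k‖ ≤ K * (1 - c * α) ^ k := by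
  classical
  set Hc := H.map (Complex.ofReal) with hHc
  obtain ⟨m, hm, R, hR, hspec⟩ : ∃ m > (0:ℝ), ∃ R > (0:ℝ),
      ∀ z ∈ spectrum ℂ Hc, z.re ≤ -m ∧ ‖z‖ ≤ R := by
    rcases Set.eq_empty_or_nonempty (spectrum ℂ Hc) with he | hne
    · exact ⟨1, one_pos, 1, one_pos, fun z hz => by simp [he] at hz⟩
    · have hcpt : IsCompact (spectrum ℂ Hc) := spectrum.isCompact Hc
      obtain ⟨z₀, hz₀, hmax⟩ := hcpt.exists_isMaxOn hne (Complex.continuous_re.continuousOn)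
      obtain ⟨w₀, hw₀, hwmax⟩ := hcpt.exists_isMaxOn hne (continuous_norm.continuousOn)
      refine ⟨-z₀.re, by simpa using hH z₀ hz₀, ‖w₀‖ + 1, by positivity, fun z hz => ?_⟩
      refine ⟨by simpa using hmax hz, ?_⟩
      have h4 := hwmax hz
      simp only [Set.mem_setOf_eq] at h4 ⊢
      calc ‖z‖ ≤ ‖w₀‖ := h4
      _ ≤ ‖w₀‖ + 1 := by linarith
  set α₁ : ℝ := min (m / (R * R)) (1 / m) with hα₁def
  have hα₁ : 0 < α₁ := lt_min (by positivity) (by positivity)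
  have hα₁R : α₁ * (R * R) ≤ m := by
    have h1 : α₁ ≤ m / (R * R) := min_le_left _ _
    calc α₁ * (R * R) ≤ m / (R * R) * (R * R) := by nlinarith
    _ = m := by field_simp
  have hα₁m : α₁ * m ≤ 1 := by
    have h1 : α₁ ≤ 1 / m := min_le_right _ _
    calc α₁ * m ≤ 1 / m * m := by nlinarith
    _ = 1 := by field_simp
  clear_value α₁
  set ρ₀ : ℝ := 1 - α₁ * m / 2 with hρ₀def
  have hρ₀pos : 0 < ρ₀ := by rw [hρ₀def]; linarith
  have hρ₀lt : ρ₀ < 1 := by rw [hρ₀def]; nlinarith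
  set Ac : Matrix (Fin d) (Fin d) ℂ := (1 + α₁ • H).map Complex.ofReal with hAc
  have hAceq : Ac = algebraMap ℂ _ (1:ℂ) + ((α₁ : ℂ) • Hc) := by
    ext i j
    rcases eq_or_ne i j with rfl | hij
    · simp [hAc, hHc, Matrix.map_apply, Matrix.add_apply, Matrix.smul_apply, Matrix.one_apply,
        Matrix.algebraMap_matrix_apply, Complex.real_smul]
    · simp [hAc, hHc, Matrix.map_apply, Matrix.add_apply, Matrix.smul_apply, Matrix.one_apply,
        Matrix.algebraMap_matrix_apply, hij, Complex.real_smul]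
  have hα₁ne : ((α₁ : ℂ)) ≠ 0 := by exact_mod_cast hα₁.ne'
  have hspecAc : ∀ z ∈ spectrum ℂ Ac, ‖z‖ ≤ ρ₀ := by
    intro z hz
    rw [hAceq, ← spectrum.singleton_add_eq] at hz
    have hu : ((α₁ : ℂ)) • Hc = (Units.mk0 (α₁:ℂ) hα₁ne) • Hc := rfl
    rw [hu, spectrum.unit_smul_eq_smul] at hz
    obtain ⟨x, hx, y, hy, hxy⟩ := Set.mem_add.mp hz
    rw [Set.mem_smul_set] at hy
    obtain ⟨lam, hlam, hy'⟩ := hy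
    rw [Set.mem_singleton_iff] at hx
    subst hx
    obtain ⟨hre, hnrm⟩ := hspec lam hlam
    have hsmul : (Units.mk0 (α₁:ℂ) hα₁ne) • lam = (α₁:ℂ) * lam := rfl
    have hzval : z = (1:ℂ) + (α₁:ℂ) * lam := by rw [← hxy, ← hy', hsmul]
    rw [hzval]
    have hsq : ‖(1:ℂ) + (α₁:ℂ) * lam‖ ^ 2 = 1 + 2 * α₁ * lam.re + α₁ ^ 2 * ‖lam‖ ^ 2 := by
      rw [← Complex.normSq_eq_norm_sq, ← Complex.normSq_eq_norm_sq, Complex.normSq_apply,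
        Complex.normSq_apply]
      simp [Complex.add_re, Complex.add_im, Complex.mul_re, Complex.mul_im]
      ring
    have hb : ‖(1:ℂ) + (α₁:ℂ) * lam‖ ^ 2 ≤ ρ₀ ^ 2 := by
      have h1 : ‖lam‖ ^ 2 ≤ R * R := by nlinarith [norm_nonneg lam]
      rw [hsq, hρ₀def]
      have f1 : 2 * α₁ * lam.re ≤ 2 * α₁ * (-m) := by nlinarith
      have f2 : α₁ ^ 2 * ‖lam‖ ^ 2 ≤ α₁ ^ 2 * (R * R) := by nlinarith [sq_nonneg α₁]
      have f3 : α₁ ^ 2 * (R * R) ≤ α₁ * m := by nlinarith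
      nlinarith [f1, f2, f3, sq_nonneg (α₁ * m)]
    exact (pow_le_pow_iff_left₀ (norm_nonneg _) hρ₀pos.le two_ne_zero).mp hb
  clear_value ρ₀
  set ρ : ℝ := (1 + ρ₀)/2 with hρdef
  have hρpos : 0 < ρ := by rw [hρdef]; linarith
  have hρlt : ρ < 1 := by rw [hρdef]; linarith
  have hρ₀ρ : ρ₀ < ρ := by rw [hρdef]; linarith
  clear_value ρ
  have hsrad : spectralRadius ℂ Ac < ENNReal.ofReal ρ := by
    have hle : spectralRadius ℂ Ac ≤ ENNReal.ofReal ρ₀ := by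
      rw [spectralRadius]
      refine iSup₂_le fun z hz => ?_
      rw [← ENNReal.ofReal_coe_nnreal, coe_nnnorm]
      exact ENNReal.ofReal_le_ofReal (hspecAc z hz)
    refine lt_of_le_of_lt hle ?_
    rw [ENNReal.ofReal_lt_ofReal_iff (by linarith)]
    linarith
  obtain ⟨K, hK1, hKbound⟩ := gelfand_pow_bound Ac hρpos hsrad
  have hreal : ∀ n : ℕ, ‖(1 + α₁ • H) ^ n‖ ≤ K * ρ ^ n := by
    intro n
    have hmap : ((1 + α₁ • H) ^ n).map Complex.ofReal = Ac ^ n := by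
      rw [hAc]
      exact map_pow (Complex.ofRealHom.mapMatrix) (1 + α₁ • H) n
    have h5 : ‖((1 + α₁ • H) ^ n).map Complex.ofReal‖ = ‖(1 + α₁ • H) ^ n‖ :=
      Matrix.frobenius_norm_map_eq _ _ fun a => Complex.norm_real a
    rw [← h5, hmap]
    exact hKbound n
  refine ⟨α₁, hα₁, (1 - ρ)/α₁, div_pos (by linarith) hα₁, K, hK1, fun α hα hαle => ?_⟩
  set c : ℝ := (1 - ρ)/α₁ with hcdef
  have hcpos : 0 < c := div_pos (by linarith) hα₁
  have hcα₁ : c * α₁ = 1 - ρ := by rw [hcdef]; field_simp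
  clear_value c
  have hcα : c * α ≤ 1 - ρ := by
    have h1 : c * α ≤ c * α₁ := mul_le_mul_of_nonneg_left hαle hcpos.le
    linarith
  have hr0 : 0 < 1 - c * α := by nlinarith
  have hr1 : 1 - c * α < 1 := by nlinarith [mul_pos hcpos hα]
  refine ⟨⟨hr0, hr1⟩, fun k => ?_⟩
  set t : ℝ := α / α₁ with htdef
  have ht0 : 0 < t := by positivity
  have ht1 : t ≤ 1 := by rw [htdef, div_le_one hα₁]; exact hαle
  have htα : t * α₁ = α := by rw [htdef]; field_simp
  have htρ : t * ρ + (1 - t) = 1 - c * α := by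
    have h7 : t * (1 - ρ) = c * α := by
      have : t * (c * α₁) = c * (t * α₁) := by ring
      rw [hcα₁] at this
      rw [this, htα]
    nlinarith [h7]
  clear_value t
  set B : Matrix (Fin d) (Fin d) ℝ := 1 + α₁ • H with hB
  have hsplit : 1 + α • H = t • B + (1 - t) • (1 : Matrix (Fin d) (Fin d) ℝ) := by
    rw [hB, smul_add, smul_smul, htα]
    module
  have hcomm : Commute (t • B) ((1 - t) • (1 : Matrix (Fin d) (Fin d) ℝ)) :=
    ((Commute.one_right (t • B)).smul_right (1 - t))
  have hterm : ∀ i ∈ Finset.range (k + 1),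
      ‖(t • B) ^ i * ((1 - t) • (1 : Matrix (Fin d) (Fin d) ℝ)) ^ (k - i)
        * ((k.choose i : ℕ) : Matrix (Fin d) (Fin d) ℝ)‖
        ≤ K * ((t * ρ) ^ i * (1 - t) ^ (k - i) * ((k.choose i : ℕ) : ℝ)) := by
    intro i _
    have hcast : ((k.choose i : ℕ) : Matrix (Fin d) (Fin d) ℝ)
        = ((k.choose i : ℕ) : ℝ) • (1 : Matrix (Fin d) (Fin d) ℝ) := by
      rw [Nat.cast_smul_eq_nsmul, nsmul_eq_mul, mul_one]
    have h1 : (t • B) ^ i * ((1 - t) • (1 : Matrix (Fin d) (Fin d) ℝ)) ^ (k - i)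
        * ((k.choose i : ℕ) : Matrix (Fin d) (Fin d) ℝ)
        = (t ^ i * (1 - t) ^ (k - i) * ((k.choose i : ℕ) : ℝ)) • B ^ i := by
      rw [hcast]
      simp only [smul_pow, one_pow, smul_mul_assoc, mul_smul_comm, smul_smul, mul_one]
      ring_nf
    rw [h1, norm_smul, Real.norm_eq_abs]
    have habs : |t ^ i * (1 - t) ^ (k - i) * ((k.choose i : ℕ) : ℝ)|
        = t ^ i * (1 - t) ^ (k - i) * ((k.choose i : ℕ) : ℝ) := by
      apply abs_of_nonneg
      have h9 : (0:ℝ) ≤ 1 - t := by linarith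
      positivity
    rw [habs]
    calc t ^ i * (1 - t) ^ (k - i) * ((k.choose i : ℕ) : ℝ) * ‖B ^ i‖
        ≤ t ^ i * (1 - t) ^ (k - i) * ((k.choose i : ℕ) : ℝ) * (K * ρ ^ i) := by
          apply mul_le_mul_of_nonneg_left (hreal i)
          have h9 : (0:ℝ) ≤ 1 - t := by linarith
          positivity
    _ = K * ((t * ρ) ^ i * (1 - t) ^ (k - i) * ((k.choose i : ℕ) : ℝ)) := by
          rw [mul_pow]; ring
  calc ‖(1 + α • H) ^ k‖
      = ‖∑ i ∈ Finset.range (k + 1), (t • B) ^ i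
          * ((1 - t) • (1 : Matrix (Fin d) (Fin d) ℝ)) ^ (k - i)
          * ((k.choose i : ℕ) : Matrix (Fin d) (Fin d) ℝ)‖ := by
        rw [hsplit, hcomm.add_pow]
  _ ≤ ∑ i ∈ Finset.range (k + 1), ‖(t • B) ^ i
          * ((1 - t) • (1 : Matrix (Fin d) (Fin d) ℝ)) ^ (k - i)
          * ((k.choose i : ℕ) : Matrix (Fin d) (Fin d) ℝ)‖ := norm_sum_le _ _
  _ ≤ ∑ i ∈ Finset.range (k + 1),
        K * ((t * ρ) ^ i * (1 - t) ^ (k - i) * ((k.choose i : ℕ) : ℝ)) :=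
        Finset.sum_le_sum hterm
  _ = K * ∑ i ∈ Finset.range (k + 1), (t * ρ) ^ i * (1 - t) ^ (k - i) * ((k.choose i : ℕ) : ℝ) := by
        rw [Finset.mul_sum]
  _ = K * ((t * ρ) + (1 - t)) ^ k := by rw [← add_pow]
  _ = K * (1 - c * α) ^ k := by rw [htρ]

/-- Properties of the discrete Lyapunov series. -/
private lemma series_props (H B : Matrix (Fin d) (Fin d) ℝ) {α c K : ℝ}
    (hα : 0 < α) (hc : 0 < c) (hK : 1 ≤ K) (hr0 : 0 < 1 - c * α)
    (hpow : ∀ k : ℕ, ‖(1 + α • H) ^ k‖ ≤ K * (1 - c * α) ^ k) :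
    Summable (fun k : ℕ => α • ((1 + α • H) ^ k * B * ((1 + α • H)ᵀ) ^ k)) ∧
    ‖∑' k : ℕ, α • ((1 + α • H) ^ k * B * ((1 + α • H)ᵀ) ^ k)‖ ≤ K * K * ‖B‖ / c ∧
    (1 + α • H) * (∑' k : ℕ, α • ((1 + α • H) ^ k * B * ((1 + α • H)ᵀ) ^ k)) * (1 + α • H)ᵀ
      - (∑' k : ℕ, α • ((1 + α • H) ^ k * B * ((1 + α • H)ᵀ) ^ k)) + α • B = 0 := by
  set A : Matrix (Fin d) (Fin d) ℝ := 1 + α • H with hA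
  set r : ℝ := 1 - c * α with hr
  have hcα : 0 < c * α := mul_pos hc hα
  have hr1 : r < 1 := by rw [hr]; linarith
  have hrpos : 0 < r := hr0
  clear_value r
  have hr2 : r ^ 2 < 1 := by nlinarith
  have hKpos : 0 < K := lt_of_lt_of_le one_pos hK
  set g : ℕ → Matrix (Fin d) (Fin d) ℝ := fun k => α • (A ^ k * B * (Aᵀ) ^ k) with hg
  have hnormterm : ∀ k : ℕ, ‖g k‖ ≤ (α * (K * K) * ‖B‖) * (r ^ 2) ^ k := by
    intro k
    rw [hg]
    simp only
    rw [norm_smul, Real.norm_eq_abs, abs_of_pos hα]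
    have h2 : ‖(Aᵀ) ^ k‖ = ‖A ^ k‖ := by
      rw [← Matrix.transpose_pow, Matrix.frobenius_norm_transpose]
    have h1 : ‖A ^ k * B * (Aᵀ) ^ k‖ ≤ ‖A ^ k‖ * ‖B‖ * ‖A ^ k‖ := by
      calc ‖A ^ k * B * (Aᵀ) ^ k‖ ≤ ‖A ^ k * B‖ * ‖(Aᵀ) ^ k‖ := norm_mul_le _ _
      _ ≤ ‖A ^ k‖ * ‖B‖ * ‖(Aᵀ) ^ k‖ :=
          mul_le_mul_of_nonneg_right (norm_mul_le _ _) (norm_nonneg _)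
      _ = ‖A ^ k‖ * ‖B‖ * ‖A ^ k‖ := by rw [h2]
    have h3 : ‖A ^ k‖ ≤ K * r ^ k := hpow k
    have h4 : (0:ℝ) ≤ ‖A ^ k‖ := norm_nonneg _
    have h5 : (0:ℝ) ≤ ‖B‖ := norm_nonneg _
    have h6 : (0:ℝ) ≤ r ^ k := by positivity
    have h7 : (r ^ 2) ^ k = r ^ k * r ^ k := by rw [← pow_mul, two_mul, pow_add]
    calc α * ‖A ^ k * B * (Aᵀ) ^ k‖ ≤ α * (‖A ^ k‖ * ‖B‖ * ‖A ^ k‖) :=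
          mul_le_mul_of_nonneg_left h1 hα.le
    _ ≤ α * ((K * r ^ k) * ‖B‖ * (K * r ^ k)) := by
          apply mul_le_mul_of_nonneg_left _ hα.le
          have h8 := mul_le_mul h3 (mul_le_mul_of_nonneg_right h3 h5) (by positivity)
            (by positivity)
          calc ‖A ^ k‖ * ‖B‖ * ‖A ^ k‖ = ‖A ^ k‖ * (‖A ^ k‖ * ‖B‖) := by ring
          _ ≤ (K * r ^ k) * ((K * r ^ k) * ‖B‖) := h8
          _ = (K * r ^ k) * ‖B‖ * (K * r ^ k) := by ring
    _ = (α * (K * K) * ‖B‖) * (r ^ 2) ^ k := by rw [h7]; ring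
  have hgeo : Summable fun k : ℕ => (α * (K * K) * ‖B‖) * (r ^ 2) ^ k :=
    (summable_geometric_of_lt_one (by positivity) hr2).mul_left _
  have hsummable : Summable g := Summable.of_norm_bounded hgeo hnormterm
  have hgeoHasSum : HasSum (fun k : ℕ => (α * (K * K) * ‖B‖) * (r ^ 2) ^ k)
      ((α * (K * K) * ‖B‖) * (1 - r ^ 2)⁻¹) :=
    (hasSum_geometric_of_lt_one (by positivity) hr2).mul_left _
  have hnormbound : ‖∑' k, g k‖ ≤ K * K * ‖B‖ / c := by
    have hb := tsum_of_norm_bounded hgeoHasSum hnormterm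
    have h8 : 0 < 1 - r ^ 2 := by nlinarith
    have h9 : c * α ≤ 1 - r ^ 2 := by nlinarith
    have h10 : (1 - r ^ 2)⁻¹ ≤ (c * α)⁻¹ := by
      apply inv_anti₀ hcα h9
    calc ‖∑' k, g k‖ ≤ (α * (K * K) * ‖B‖) * (1 - r ^ 2)⁻¹ := hb
    _ ≤ (α * (K * K) * ‖B‖) * (c * α)⁻¹ := by
        apply mul_le_mul_of_nonneg_left h10 (by positivity)
    _ = K * K * ‖B‖ / c := by field_simp
  have hdiscrete : A * (∑' k, g k) * Aᵀ - (∑' k, g k) + α • B = 0 := by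
    have h1 : HasSum g (∑' k, g k) := hsummable.hasSum
    have h2 : HasSum (fun k => A * g k * Aᵀ) (A * (∑' k, g k) * Aᵀ) :=
      (h1.mul_left A).mul_right Aᵀ
    have h3 : (fun k => A * g k * Aᵀ) = fun k => g (k + 1) := by
      funext k
      rw [hg]
      simp only
      rw [mul_smul_comm, smul_mul_assoc]
      congr 1
      rw [pow_succ' A, pow_succ (Aᵀ)]
      noncomm_ring
    rw [h3] at h2
    have h4 : HasSum (fun k => g (k + 1)) ((∑' k, g k) - ∑ i ∈ Finset.range 1, g i) :=
      (hasSum_nat_add_iff' 1).mpr h1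
    have h5 : A * (∑' k, g k) * Aᵀ = (∑' k, g k) - ∑ i ∈ Finset.range 1, g i :=
      h2.unique h4
    have h6 : ∑ i ∈ Finset.range 1, g i = α • B := by
      rw [Finset.sum_range_one, hg]
      simp
    rw [h5, h6]
    abel
  exact ⟨hsummable, hnormbound, hdiscrete⟩

private lemma fixed_eq_zero (A X : Matrix (Fin d) (Fin d) ℝ) {K r : ℝ}
    (hK : 1 ≤ K) (hr0 : 0 ≤ r) (hr1 : r < 1)
    (hpow : ∀ k : ℕ, ‖A ^ k‖ ≤ K * r ^ k) (hfix : A * X * Aᵀ = X) : X = 0 := by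
  have hiter : ∀ k : ℕ, A ^ k * X * (Aᵀ) ^ k = X := by
    intro k
    induction k with
    | zero => simp
    | succ n ih =>
      rw [pow_succ A, pow_succ' (Aᵀ)]
      calc A ^ n * A * X * (Aᵀ * (Aᵀ) ^ n) = A ^ n * (A * X * Aᵀ) * (Aᵀ) ^ n := by noncomm_ring
      _ = A ^ n * X * (Aᵀ) ^ n := by rw [hfix]
      _ = X := ih
  have hr2 : r ^ 2 < 1 := by nlinarith
  have hbound : ∀ k : ℕ, ‖X‖ ≤ (K * K * ‖X‖) * (r ^ 2) ^ k := by
    intro k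
    conv_lhs => rw [← hiter k]
    have h2 : ‖(Aᵀ) ^ k‖ = ‖A ^ k‖ := by
      rw [← Matrix.transpose_pow, Matrix.frobenius_norm_transpose]
    have h7 : (r ^ 2) ^ k = r ^ k * r ^ k := by rw [← pow_mul, two_mul, pow_add]
    have h3 := hpow k
    calc ‖A ^ k * X * (Aᵀ) ^ k‖ ≤ ‖A ^ k * X‖ * ‖(Aᵀ) ^ k‖ := norm_mul_le _ _
    _ ≤ ‖A ^ k‖ * ‖X‖ * ‖(Aᵀ) ^ k‖ :=
        mul_le_mul_of_nonneg_right (norm_mul_le _ _) (norm_nonneg _)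
    _ = ‖A ^ k‖ * ‖X‖ * ‖A ^ k‖ := by rw [h2]
    _ ≤ (K * r ^ k) * ‖X‖ * (K * r ^ k) := by
        have h4 : (0:ℝ) ≤ ‖A ^ k‖ := norm_nonneg _
        have h5 : (0:ℝ) ≤ ‖X‖ := norm_nonneg _
        have h8 : ‖A ^ k‖ * ‖A ^ k‖ ≤ (K * r ^ k) * (K * r ^ k) :=
          mul_le_mul h3 h3 h4 (by positivity)
        nlinarith [mul_le_mul_of_nonneg_right h8 h5]
    _ = (K * K * ‖X‖) * (r ^ 2) ^ k := by rw [h7]; ring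
  have hlim : Tendsto (fun k : ℕ => (K * K * ‖X‖) * (r ^ 2) ^ k) atTop (nhds 0) := by
    have h1 := (tendsto_pow_atTop_nhds_zero_of_lt_one
      (by positivity : (0:ℝ) ≤ r ^ 2) hr2).const_mul (K * K * ‖X‖)
    simpa using h1
  have hle : ‖X‖ ≤ 0 := le_of_tendsto_of_tendsto' tendsto_const_nhds hlim hbound
  exact norm_le_zero_iff.mp hle

private lemma expand_mul (H W : Matrix (Fin d) (Fin d) ℝ) (α : ℝ) :
    (1 + α • H) * W * (1 + α • H)ᵀ
      = W + α • (H * W + W * Hᵀ) + (α * α) • (H * W * Hᵀ) := by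
  have ht : (1 + α • H)ᵀ = 1 + α • Hᵀ := by
    rw [transpose_add, transpose_smul, transpose_one]
  rw [ht]
  have e1 : (1 + α • H) * W = W + α • (H * W) := by
    rw [add_mul, one_mul, smul_mul_assoc]
  rw [e1, mul_add, mul_one, mul_smul_comm]
  simp only [add_mul, smul_mul_assoc, smul_smul, smul_add, mul_assoc]
  abel

end Aux

section Main

attribute [local instance] Matrix.frobeniusNormedAddCommGroup Matrix.frobeniusNormedRing
  Matrix.frobeniusNormedAlgebra Matrix.frobeniusNormedSpace

/-- for a Hurwitz matrix `H` and any matrix `O`: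
(a) the Lyapunov equation `HW + WHᵀ + O = 0` has a unique solution `W`;
(b) for small `α` the series `W^{(α)} = α ∑_k (I+αH)^k O ((I+αH)ᵀ)^k` converges and
solves the discrete-time Sylvester equation
`(I+αH) W^{(α)} (I+αH)ᵀ − W^{(α)} + αO = 0`;
(c) `‖W^{(α)} − W‖ ≤ C α` (stated entrywise). -/
theorem lyapunov_discrete_vs_continuous {d : ℕ} (H O : Matrix (Fin d) (Fin d) ℝ)
    (hH : ∀ z ∈ spectrum ℂ (H.map Complex.ofReal), z.re < 0) :
    (∃! W : Matrix (Fin d) (Fin d) ℝ, H * W + W * Hᵀ + O = 0) ∧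
    ∃ α₀ > (0 : ℝ), ∃ C > (0 : ℝ), ∀ α : ℝ, 0 < α → α ≤ α₀ →
      Summable (fun k : ℕ => α • ((1 + α • H) ^ k * O * ((1 + α • H)ᵀ) ^ k)) ∧
      (1 + α • H) * (∑' k : ℕ, α • ((1 + α • H) ^ k * O * ((1 + α • H)ᵀ) ^ k))
          * (1 + α • H)ᵀ
        - (∑' k : ℕ, α • ((1 + α • H) ^ k * O * ((1 + α • H)ᵀ) ^ k)) + α • O = 0 ∧
      ∀ W : Matrix (Fin d) (Fin d) ℝ, H * W + W * Hᵀ + O = 0 →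
        ∀ i j, |((∑' k : ℕ, α • ((1 + α • H) ^ k * O * ((1 + α • H)ᵀ) ^ k) :
            Matrix (Fin d) (Fin d) ℝ)) i j - W i j| ≤ C * α := by
  classical
  obtain ⟨α₁, hα₁, c, hc, K, hK, hmain⟩ := key_bound H hH
  -- injectivity of the Lyapunov operator
  have hinj : ∀ W : Matrix (Fin d) (Fin d) ℝ, H * W + W * Hᵀ = 0 → W = 0 := by
    intro W hW
    set α : ℝ := min α₁ (c / (K * K * (‖H‖ * ‖H‖) + 1)) with hαdef
    have hα : 0 < α := lt_min hα₁ (by positivity)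
    have hαle : α ≤ α₁ := min_le_left _ _
    have hαle2 : α ≤ c / (K * K * (‖H‖ * ‖H‖) + 1) := min_le_right _ _
    clear_value α
    obtain ⟨⟨hr0, hr1⟩, hpow⟩ := hmain α hα hαle
    obtain ⟨hsum, hbnd, hdisc⟩ :=
      series_props H (-(α • (H * W * Hᵀ))) hα hc hK hr0 hpow
    set Z : Matrix (Fin d) (Fin d) ℝ :=
      ∑' k : ℕ, α • ((1 + α • H) ^ k * -(α • (H * W * Hᵀ)) * ((1 + α • H)ᵀ) ^ k) with hZ
    have hWid : (1 + α • H) * W * (1 + α • H)ᵀ - W = (α * α) • (H * W * Hᵀ) := by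
      rw [expand_mul, hW]
      simp
    have hZid : (1 + α • H) * Z * (1 + α • H)ᵀ - Z = (α * α) • (H * W * Hᵀ) := by
      have h2 : α • -(α • (H * W * Hᵀ)) = -((α * α) • (H * W * Hᵀ)) := by
        rw [smul_neg, smul_smul]
      rw [h2] at hdisc
      linear_combination (norm := module) hdisc
    have hfixW : (1 + α • H) * (W - Z) * (1 + α • H)ᵀ = W - Z := by
      have h3 : (1 + α • H) * (W - Z) * (1 + α • H)ᵀ
          = (1 + α • H) * W * (1 + α • H)ᵀ - (1 + α • H) * Z * (1 + α • H)ᵀ := by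
        rw [mul_sub, sub_mul]
      rw [h3]
      linear_combination (norm := module) hWid - hZid
    have hWZ : W - Z = 0 :=
      fixed_eq_zero (1 + α • H) (W - Z) hK hr0.le hr1 hpow hfixW
    have hWeqZ : W = Z := sub_eq_zero.mp hWZ
    -- norm estimate
    have hHW : ‖H * W * Hᵀ‖ ≤ ‖H‖ * ‖W‖ * ‖H‖ := by
      calc ‖H * W * Hᵀ‖ ≤ ‖H * W‖ * ‖Hᵀ‖ := norm_mul_le _ _
      _ ≤ ‖H‖ * ‖W‖ * ‖Hᵀ‖ := mul_le_mul_of_nonneg_right (norm_mul_le _ _) (norm_nonneg _)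
      _ = ‖H‖ * ‖W‖ * ‖H‖ := by rw [Matrix.frobenius_norm_transpose]
    have h4 : ‖-(α • (H * W * Hᵀ))‖ = α * ‖H * W * Hᵀ‖ := by
      rw [norm_neg, norm_smul, Real.norm_eq_abs, abs_of_pos hα]
    have hnorm : ‖W‖ ≤ K * K * (α * (‖H‖ * ‖W‖ * ‖H‖)) / c := by
      calc ‖W‖ = ‖Z‖ := by rw [hWeqZ]
      _ ≤ K * K * ‖-(α • (H * W * Hᵀ))‖ / c := hbnd
      _ = K * K * (α * ‖H * W * Hᵀ‖) / c := by rw [h4]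
      _ ≤ K * K * (α * (‖H‖ * ‖W‖ * ‖H‖)) / c := by gcongr
    have hWnorm0 : ‖W‖ = 0 := by
      by_contra hne
      have hWpos : 0 < ‖W‖ := lt_of_le_of_ne (norm_nonneg W) (Ne.symm hne)
      have h6 : ‖W‖ * c ≤ K * K * (α * (‖H‖ * ‖W‖ * ‖H‖)) := (le_div_iff₀ hc).mp hnorm
      have hα2 : α * (K * K * (‖H‖ * ‖H‖) + 1) ≤ c :=
        (le_div_iff₀ (by positivity)).mp hαle2
      nlinarith [mul_le_mul_of_nonneg_right hα2 (norm_nonneg W), mul_pos hα hWpos]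
    exact norm_eq_zero.mp hWnorm0
  -- the Lyapunov operator is a linear bijection
  have hK0 : (0:ℝ) < K := lt_of_lt_of_le one_pos hK
  set L : Matrix (Fin d) (Fin d) ℝ →ₗ[ℝ] Matrix (Fin d) (Fin d) ℝ :=
    { toFun := fun W => H * W + W * Hᵀ
      map_add' := fun X Y => by
        show H * (X + Y) + (X + Y) * Hᵀ = (H * X + X * Hᵀ) + (H * Y + Y * Hᵀ)
        rw [mul_add, add_mul]
        abel
      map_smul' := fun r X => by
        show H * (r • X) + (r • X) * Hᵀ = r • (H * X + X * Hᵀ)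
        rw [mul_smul_comm, smul_mul_assoc, smul_add] } with hL
  have hLapp : ∀ W, L W = H * W + W * Hᵀ := fun W => rfl
  have hLinj : Function.Injective L := by
    intro X Y hXY
    have h1 : L (X - Y) = 0 := by
      rw [map_sub, hXY, sub_self]
    have h2 : H * (X - Y) + (X - Y) * Hᵀ = 0 := h1
    have := hinj (X - Y) h2
    exact sub_eq_zero.mp this
  have hLsurj : Function.Surjective L := LinearMap.injective_iff_surjective.mp hLinj
  obtain ⟨W₀, hW₀⟩ := hLsurj (-O)
  have hW₀eq : H * W₀ + W₀ * Hᵀ + O = 0 := by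
    rw [hLapp] at hW₀
    rw [hW₀]
    abel
  have huniq : ∀ W : Matrix (Fin d) (Fin d) ℝ, H * W + W * Hᵀ + O = 0 → W = W₀ := by
    intro W hW
    have h1 : H * (W - W₀) + (W - W₀) * Hᵀ = 0 := by
      have h2 : (H * W + W * Hᵀ + O) - (H * W₀ + W₀ * Hᵀ + O) = 0 := by
        rw [hW, hW₀eq, sub_self]
      calc H * (W - W₀) + (W - W₀) * Hᵀ
          = (H * W + W * Hᵀ + O) - (H * W₀ + W₀ * Hᵀ + O) := by
            rw [mul_sub, sub_mul]; abel
      _ = 0 := h2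
    exact sub_eq_zero.mp (hinj _ h1)
  refine ⟨⟨W₀, hW₀eq, huniq⟩, ?_⟩
  -- parts (b) and (c)
  set C : ℝ := K * K * ‖H * W₀ * Hᵀ‖ / c + 1 with hC
  have hCpos : 0 < C := by
    rw [hC]
    have : (0:ℝ) ≤ K * K * ‖H * W₀ * Hᵀ‖ / c := by positivity
    linarith
  refine ⟨α₁, hα₁, C, hCpos, fun α hα hαle => ?_⟩
  obtain ⟨⟨hr0, hr1⟩, hpow⟩ := hmain α hα hαle
  obtain ⟨hsumO, hbndO, hdiscO⟩ := series_props H O hα hc hK hr0 hpow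
  refine ⟨hsumO, hdiscO, fun W hW i j => ?_⟩
  have hWW₀ : W = W₀ := huniq W hW
  rw [hWW₀]
  -- compare the discrete series with the continuous solution
  obtain ⟨hsum1, hbnd1, hdisc1⟩ :=
    series_props H (α • (H * W₀ * Hᵀ)) hα hc hK hr0 hpow
  set S : Matrix (Fin d) (Fin d) ℝ :=
    ∑' k : ℕ, α • ((1 + α • H) ^ k * O * ((1 + α • H)ᵀ) ^ k) with hS
  set Z : Matrix (Fin d) (Fin d) ℝ :=
    ∑' k : ℕ, α • ((1 + α • H) ^ k * (α • (H * W₀ * Hᵀ)) * ((1 + α • H)ᵀ) ^ k) with hZ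
  have hW₀id : (1 + α • H) * W₀ * (1 + α • H)ᵀ - W₀
      = -(α • O) + (α * α) • (H * W₀ * Hᵀ) := by
    rw [expand_mul]
    have h1 : H * W₀ + W₀ * Hᵀ = -O := by
      have := hW₀eq
      linear_combination (norm := module) this
    rw [h1, smul_neg]
    abel
  have hfix : (1 + α • H) * (S - W₀ - Z) * (1 + α • H)ᵀ = S - W₀ - Z := by
    have hZid : (1 + α • H) * Z * (1 + α • H)ᵀ - Z = -((α * α) • (H * W₀ * Hᵀ)) := by
      have h2 : α • (α • (H * W₀ * Hᵀ)) = (α * α) • (H * W₀ * Hᵀ) := by rw [smul_smul]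
      rw [h2] at hdisc1
      linear_combination (norm := module) hdisc1
    have hSid : (1 + α • H) * S * (1 + α • H)ᵀ - S = -(α • O) := by
      linear_combination (norm := module) hdiscO
    have h3 : (1 + α • H) * (S - W₀ - Z) * (1 + α • H)ᵀ
        = (1 + α • H) * S * (1 + α • H)ᵀ - (1 + α • H) * W₀ * (1 + α • H)ᵀ
          - (1 + α • H) * Z * (1 + α • H)ᵀ := by
      rw [mul_sub, sub_mul, mul_sub, sub_mul]
    rw [h3]
    linear_combination (norm := module) hSid - hW₀id - hZid
  have hSWZ : S - W₀ - Z = 0 :=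
    fixed_eq_zero (1 + α • H) _ hK hr0.le hr1 hpow hfix
  have hSW₀ : S - W₀ = Z := by
    linear_combination (norm := module) hSWZ
  have hZnorm : ‖Z‖ ≤ C * α := by
    have h4 : ‖α • (H * W₀ * Hᵀ)‖ = α * ‖H * W₀ * Hᵀ‖ := by
      rw [norm_smul, Real.norm_eq_abs, abs_of_pos hα]
    have h5 : ‖Z‖ ≤ K * K * (α * ‖H * W₀ * Hᵀ‖) / c := by
      calc ‖Z‖ ≤ K * K * ‖α • (H * W₀ * Hᵀ)‖ / c := hbnd1
      _ = K * K * (α * ‖H * W₀ * Hᵀ‖) / c := by rw [h4]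
    calc ‖Z‖ ≤ K * K * (α * ‖H * W₀ * Hᵀ‖) / c := h5
    _ = (K * K * ‖H * W₀ * Hᵀ‖ / c) * α := by ring
    _ ≤ C * α := by
        apply mul_le_mul_of_nonneg_right _ hα.le
        rw [hC]
        linarith
  calc |S i j - W₀ i j| = |(S - W₀) i j| := by rw [Matrix.sub_apply]
  _ ≤ ‖S - W₀‖ := frob_entry_le _ i j
  _ = ‖Z‖ := by rw [hSW₀]
  _ ≤ C * α := hZnorm

end Main
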